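/- Let G be a finite connected simple graph on n ≥ 2 vertices with adjacency matrix A_G, all degrees d_i > 0, normalized adjacency Â = D^{-1/2} A_G D^{-1/2}, and normalized Laplacian Δ = I − Â with eigenvalues 0 = λ₀ ≤ λ₁ ≤ … ≤ λ_{n−1}. Let W ∈ ℝ^{d×d} be symmetric with eigenvalues μ₀ ≤ μ₁ ≤ … ≤ μ_{d−1}, and suppose |μ₀| (λ_{n−1} − 1) < μ_{d−1}. Then for (Lebesgue) almost every initial condition F₀ ∈ ℝ^{n×d} with F₀ ≠ 0, the solution F : [0, ∞) → ℝ^{n×d} of the linear matrix ODE Ḟ(t) = Â F(t) W with F(0) = F₀ satisfies: F(t) ≠ 0 for all t, and the normalized Dirichlet energy trace(F(t)ᵀ Δ F(t)) / ‖F(t)‖_F² converges to λ₀ = 0 as t → ∞ (i.e., the dynamics is Low-Frequency-Dominant). -/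

import Mathlib

open Matrix MeasureTheory Filter

attribute [local instance] Matrix.normedAddCommGroup Matrix.normedSpace

set_option maxHeartbeats 1000000

section Aux

private lemma null_of_linear {n d : ℕ} (L : (Fin n → Fin d → ℝ) →ₗ[ℝ] ℝ) (hL : L ≠ 0) :
    ∀ᵐ f : Fin n → Fin d → ℝ, L f ≠ 0 := by
  have h : volume {f : Fin n → Fin d → ℝ | L f = 0} = 0 := by
    have hset : {f : Fin n → Fin d → ℝ | L f = 0} = (LinearMap.ker L : Set _) := rfl
    rw [hset]
    exact Measure.addHaar_submodule volume _ (fun h => hL (LinearMap.ker_eq_top.mp h))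
  rw [ae_iff]
  simpa using h

private lemma scalar_ode {g : ℝ → ℝ} {c : ℝ}
    (h : ∀ t ∈ Set.Ici (0:ℝ), HasDerivWithinAt g (c * g t) (Set.Ici 0) t) :
    ∀ t ∈ Set.Ici (0:ℝ), g t = Real.exp (c * t) * g 0 := by
  intro t ht
  have hd : ∀ x ∈ Set.Ici (0:ℝ),
      HasDerivWithinAt (fun s => Real.exp (-c * s) * g s) 0 (Set.Ici 0) x := by
    intro x hx
    have h1 : HasDerivAt (fun s : ℝ => Real.exp (-c * s)) (Real.exp (-c * x) * (-c)) x := by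
      have := ((hasDerivAt_id x).const_mul (-c)).exp
      simpa using this
    have h2 := h1.hasDerivWithinAt.mul (h x hx)
    have h3 : Real.exp (-c * x) * -c * g x + Real.exp (-c * x) * (c * g x) = 0 := by ring
    rw [h3] at h2
    exact h2
  have hmv := Convex.norm_image_sub_le_of_norm_hasDerivWithin_le (C := 0) hd
    (fun x _ => by simp) (convex_Ici 0) Set.self_mem_Ici ht
  have hconst : Real.exp (-c * t) * g t = Real.exp (-c * 0) * g 0 := by
    have h0 : ‖Real.exp (-c*t) * g t - Real.exp (-c*0) * g 0‖ ≤ 0 := by simpa using hmv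
    have := le_antisymm h0 (norm_nonneg _)
    rwa [norm_eq_zero, sub_eq_zero] at this
  have hexp : Real.exp (c*t) * Real.exp (-c*t) = 1 := by
    rw [← Real.exp_add]; simp
  calc g t = Real.exp (c*t) * Real.exp (-c*t) * g t := by rw [hexp, one_mul]
    _ = Real.exp (c*t) * (Real.exp (-c*t) * g t) := by ring
    _ = Real.exp (c*t) * g 0 := by rw [hconst]; simp

private lemma trace_conj_diag {n d : ℕ} (lam : Fin n → ℝ) (H : Matrix (Fin n) (Fin d) ℝ) :
    (Hᵀ * Matrix.diagonal lam * H).trace = ∑ i, ∑ j, lam i * (H i j)^2 := by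
  simp only [Matrix.trace, Matrix.diag_apply, Matrix.mul_apply, Matrix.transpose_apply,
    Matrix.diagonal_apply, ite_mul, mul_ite, zero_mul, mul_zero, Finset.sum_ite_eq,
    Finset.sum_ite_eq', Finset.mem_univ, if_true, Finset.sum_mul, Finset.mul_sum]
  rw [Finset.sum_comm]
  refine Finset.sum_congr rfl fun i _ => Finset.sum_congr rfl fun j _ => by ring

private lemma trace_self {n d : ℕ} (H : Matrix (Fin n) (Fin d) ℝ) :
    (Hᵀ * H).trace = ∑ i, ∑ j, (H i j)^2 := by
  simp only [Matrix.trace, Matrix.diag_apply, Matrix.mul_apply, Matrix.transpose_apply]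
  rw [Finset.sum_comm]
  refine Finset.sum_congr rfl fun i _ => Finset.sum_congr rfl fun j _ => by ring

private lemma tendsto_exp_neg {k : ℝ} (hk : k < 0) :
    Tendsto (fun t : ℝ => Real.exp (k * t)) atTop (nhds 0) := by
  apply Real.tendsto_exp_atBot.comp
  exact Tendsto.const_mul_atTop_of_neg hk tendsto_id

private def entryLM {n d : ℕ} (Q : Matrix (Fin n) (Fin n) ℝ) (P : Matrix (Fin d) (Fin d) ℝ)
    (i : Fin n) (j : Fin d) : Matrix (Fin n) (Fin d) ℝ →ₗ[ℝ] ℝ where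
  toFun M := (Qᵀ * M * P) i j
  map_add' M N := by simp [Matrix.mul_add, Matrix.add_mul]
  map_smul' c M := by simp [Matrix.mul_smul, Matrix.smul_mul]
private def entryL {n d : ℕ} (Q : Matrix (Fin n) (Fin n) ℝ) (P : Matrix (Fin d) (Fin d) ℝ)
    (i : Fin n) (j : Fin d) : (Fin n → Fin d → ℝ) →ₗ[ℝ] ℝ where
  toFun f := (Qᵀ * Matrix.of f * P) i j
  map_add' f g := by
    show (Qᵀ * (Matrix.of f + Matrix.of g) * P) i j = _
    rw [Matrix.mul_add, Matrix.add_mul, Matrix.add_apply]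
  map_smul' c f := by
    show (Qᵀ * (c • Matrix.of f) * P) i j = _
    rw [Matrix.mul_smul, Matrix.smul_mul, Matrix.smul_apply, smul_eq_mul,
      RingHom.id_apply, smul_eq_mul]

end Aux

/-- **Low-Frequency-Dominant dynamics (Theorem 4.3 of Di Giovanni et al., LFD case).**
Let `G` be a connected finite simple graph on `n ≥ 2` vertices with positive degrees,
normalized adjacency `Â = D^{-1/2} A D^{-1/2}` and normalized Laplacian `Δ = I − Â`
with ordered eigenvalues `0 = λ₀ ≤ … ≤ λ_{n−1}` (spectral decomposition `Δ = Q Λ Qᵀ`),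
and let `W` be symmetric with ordered eigenvalues `μ₀ ≤ … ≤ μ_{d−1}`
(spectral decomposition `W = P M Pᵀ`). If `|μ₀| (λ_{n−1} − 1) < μ_{d−1}`, then for
Lebesgue-almost every nonzero initial condition `F₀`, any solution of `Ḟ = Â F W` on
`[0,∞)` with `F(0) = F₀` never vanishes and its normalized Dirichlet energy
`trace(Fᵀ Δ F)/‖F‖_F²` converges to `λ₀ = 0`: the dynamics is LFD. -/
theorem lfd_dynamics {n d : ℕ} (hn : 2 ≤ n) (hd : 0 < d)
    (G : SimpleGraph (Fin n)) [DecidableRel G.Adj] (hG : G.Connected)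
    (hdeg : ∀ i, 0 < G.degree i)
    (Ahat Δ : Matrix (Fin n) (Fin n) ℝ)
    (hAhat : Ahat =
      Matrix.diagonal (fun i => (Real.sqrt (G.degree i))⁻¹) * G.adjMatrix ℝ *
        Matrix.diagonal (fun i => (Real.sqrt (G.degree i))⁻¹))
    (hΔ : Δ = 1 - Ahat)
    (lam : Fin n → ℝ) (hlam_mono : Monotone lam) (hlam0 : lam ⟨0, by omega⟩ = 0)
    (Q : Matrix (Fin n) (Fin n) ℝ) (hQorth : Qᵀ * Q = 1 ∧ Q * Qᵀ = 1)
    (hΔspec : Δ = Q * Matrix.diagonal lam * Qᵀ)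
    (W : Matrix (Fin d) (Fin d) ℝ) (hW : W.IsSymm)
    (mu : Fin d → ℝ) (hmu_mono : Monotone mu)
    (P : Matrix (Fin d) (Fin d) ℝ) (hPorth : Pᵀ * P = 1 ∧ P * Pᵀ = 1)
    (hWspec : W = P * Matrix.diagonal mu * Pᵀ)
    (hcond : |mu ⟨0, hd⟩| * (lam ⟨n - 1, by omega⟩ - 1) < mu ⟨d - 1, by omega⟩) :
    ∀ᵐ f : Fin n → Fin d → ℝ,
      Matrix.of f ≠ 0 →
      ∀ F : ℝ → Matrix (Fin n) (Fin d) ℝ,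
        F 0 = Matrix.of f →
        (∀ t : ℝ, 0 ≤ t → HasDerivWithinAt F (Ahat * F t * W) (Set.Ici 0) t) →
        (∀ t : ℝ, 0 ≤ t → F t ≠ 0) ∧
        Tendsto
          (fun t : ℝ => ((F t)ᵀ * Δ * F t).trace / ∑ i : Fin n, ∑ j : Fin d, (F t i j) ^ 2)
          atTop (nhds (lam ⟨0, by omega⟩)) := by
  classical
  obtain ⟨hQl, hQr⟩ := hQorth
  obtain ⟨hPl, hPr⟩ := hPorth
  set i0 : Fin n := ⟨0, by omega⟩ with hi0def
  set iN : Fin n := ⟨n - 1, by omega⟩ with hiNdef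
  set j0 : Fin d := ⟨0, hd⟩ with hj0def
  set jD : Fin d := ⟨d - 1, by omega⟩ with hjDdef
  have hlam_nonneg : ∀ i, 0 ≤ lam i := fun i => by
    rw [← hlam0]; exact hlam_mono (show i0 ≤ i by simp [Fin.le_def, hi0def])
  have hlam_le : ∀ i, lam i ≤ lam iN := fun i =>
    hlam_mono (show i ≤ iN by simp [Fin.le_def, hiNdef]; omega)
  have hmu_le : ∀ j, mu j ≤ mu jD := fun j =>
    hmu_mono (show j ≤ jD by simp [Fin.le_def, hjDdef]; omega)
  have hmu_ge : ∀ j, mu j0 ≤ mu j := fun j =>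
    hmu_mono (show j0 ≤ j by simp [Fin.le_def, hj0def])
  -- trace of Δ is n
  have htrA : Ahat.trace = 0 := by
    rw [hAhat]
    simp only [Matrix.trace, Matrix.diag_apply, Matrix.mul_diagonal, Matrix.diagonal_mul,
      SimpleGraph.adjMatrix_apply]
    simp
  have htrΔ : Δ.trace = n := by
    rw [hΔ, Matrix.trace_sub, Matrix.trace_one, htrA]
    simp
  have hsum : ∑ i, lam i = n := by
    have h1 := htrΔ
    rw [hΔspec, Matrix.trace_mul_cycle, hQl, Matrix.one_mul, Matrix.trace_diagonal] at h1
    exact h1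
  have hΛmax1 : 1 ≤ lam iN := by
    have h1 : (n : ℝ) ≤ n * lam iN := by
      calc (n : ℝ) = ∑ i, lam i := hsum.symm
        _ ≤ ∑ _i : Fin n, lam iN := Finset.sum_le_sum fun i _ => hlam_le i
        _ = n * lam iN := by
              rw [Finset.sum_const, Finset.card_univ, Fintype.card_fin, nsmul_eq_mul]
    have hn' : (0 : ℝ) < n := by positivity
    nlinarith
  have hmuD : 0 < mu jD := lt_of_le_of_lt (mul_nonneg (abs_nonneg _) (by linarith)) hcond
  -- key spectral inequality
  have hkey : ∀ i j, (1 - lam i) * mu j < mu jD ∨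
      ((1 - lam i) * mu j = mu jD ∧ lam i = 0) := by
    intro i j
    rcases eq_or_lt_of_le (hlam_nonneg i) with h0 | hpos
    · rcases eq_or_lt_of_le (hmu_le j) with he | hlt
      · right
        constructor
        · rw [← h0, he]; ring
        · exact h0.symm
      · left; rw [← h0]; simpa using hlt
    · left
      rcases le_or_gt (lam i) 1 with h1 | h1
      · rcases le_or_gt (mu j) 0 with hm | hm
        · have : (1 - lam i) * mu j ≤ 0 :=
            mul_nonpos_iff.mpr (Or.inl ⟨by linarith, hm⟩)
          linarith
        · have ha : (1 - lam i) * mu j ≤ (1 - lam i) * mu jD :=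
            mul_le_mul_of_nonneg_left (hmu_le j) (by linarith)
          have hb : (1 - lam i) * mu jD < 1 * mu jD :=
            mul_lt_mul_of_pos_right (by linarith) hmuD
          linarith
      · rcases le_or_gt 0 (mu j) with hm | hm
        · have : (1 - lam i) * mu j ≤ 0 :=
            mul_nonpos_iff.mpr (Or.inr ⟨by linarith, hm⟩)
          linarith
        · have hmu0neg : mu j0 < 0 := lt_of_le_of_lt (hmu_ge j) hm
          have habs : |mu j0| = -mu j0 := abs_of_neg hmu0neg
          have h3 : (lam i - 1) * (-mu j) ≤ (lam iN - 1) * (-mu j0) := by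
            apply mul_le_mul (by linarith [hlam_le i]) (by linarith [hmu_ge j])
              (by linarith) (by linarith [hlam_le i])
          have h4 : (lam iN - 1) * (-mu j0) < mu jD := by
            rw [show (lam iN - 1) * (-mu j0) = |mu j0| * (lam iN - 1) by rw [habs]; ring]
            exact hcond
          nlinarith
  -- almost everywhere, all entries of Qᵀ F₀ P are nonzero
  have hae : ∀ᵐ f : Fin n → Fin d → ℝ, ∀ i j, (Qᵀ * Matrix.of f * P) i j ≠ 0 := by
    rw [ae_all_iff]
    intro i
    rw [ae_all_iff]
    intro j
    have hQcol : ∑ k, Q k i * Q k i = 1 := by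
      have := congrArg (fun M => M i i) hQl
      simpa [Matrix.mul_apply, Matrix.one_apply, Matrix.transpose_apply] using this
    have hPcol : ∑ l, P l j * P l j = 1 := by
      have := congrArg (fun M => M j j) hPl
      simpa [Matrix.mul_apply, Matrix.one_apply, Matrix.transpose_apply] using this
    have hone : entryL Q P i j (fun k l => Q k i * P l j) = 1 := by
      show (Qᵀ * Matrix.of (fun k l => Q k i * P l j) * P) i j = 1
      simp only [Matrix.mul_apply, Matrix.transpose_apply, Matrix.of_apply]
      have hstep : ∀ x, (∑ k, Q k i * (Q k i * P x j)) * P x j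
          = ∑ k, (Q k i * Q k i) * (P x j * P x j) := by
        intro x
        rw [Finset.sum_mul]
        exact Finset.sum_congr rfl fun k _ => by ring
      calc ∑ x, (∑ k, Q k i * (Q k i * P x j)) * P x j
          = ∑ x, ∑ k, (Q k i * Q k i) * (P x j * P x j) :=
            Finset.sum_congr rfl fun x _ => hstep x
        _ = ∑ k, ∑ x, (Q k i * Q k i) * (P x j * P x j) := Finset.sum_comm
        _ = ∑ k, (Q k i * Q k i) * ∑ x, P x j * P x j :=
            Finset.sum_congr rfl fun k _ => (Finset.mul_sum _ _ _).symm
        _ = (∑ k, Q k i * Q k i) * ∑ x, P x j * P x j := by rw [Finset.sum_mul]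
        _ = 1 := by rw [hQcol, hPcol, one_mul]
    have hLne : entryL Q P i j ≠ 0 := by
      intro hz
      rw [hz, LinearMap.zero_apply] at hone
      exact zero_ne_one hone
    filter_upwards [null_of_linear _ hLne] with f hf
    exact hf
  filter_upwards [hae] with f hf
  intro _hne F hF0 hode
  set H0 : Matrix (Fin n) (Fin d) ℝ := Qᵀ * Matrix.of f * P with hH0def
  set r : Fin n → Fin d → ℝ := fun i j => (1 - lam i) * mu j with hrdef
  -- cancellation lemmas
  have hQc : ∀ X : Matrix (Fin n) (Fin d) ℝ, Q * (Qᵀ * X) = X := fun X => by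
    rw [← Matrix.mul_assoc, hQr, Matrix.one_mul]
  have hQc' : ∀ X : Matrix (Fin n) (Fin d) ℝ, Qᵀ * (Q * X) = X := fun X => by
    rw [← Matrix.mul_assoc, hQl, Matrix.one_mul]
  have hPc : ∀ X : Matrix (Fin d) (Fin d) ℝ, P * (Pᵀ * X) = X := fun X => by
    rw [← Matrix.mul_assoc, hPr, Matrix.one_mul]
  -- conjugated dynamics matrices
  have hAconj : Qᵀ * Ahat * Q = Matrix.diagonal (fun i => 1 - lam i) := by
    have hA : Ahat = 1 - Δ := by rw [hΔ]; abel
    rw [hA, hΔspec]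
    have e1 : Qᵀ * (1 - Q * Matrix.diagonal lam * Qᵀ) * Q
        = Qᵀ * Q - (Qᵀ * Q) * Matrix.diagonal lam * (Qᵀ * Q) := by
      rw [Matrix.mul_sub, Matrix.sub_mul, Matrix.mul_one]
      simp only [Matrix.mul_assoc]
    rw [e1, hQl, Matrix.one_mul, Matrix.mul_one]
    rw [show Matrix.diagonal (fun i => 1 - lam i)
        = 1 - Matrix.diagonal lam from by
      rw [← Matrix.diagonal_one, ← Matrix.diagonal_sub]]
  have hWconj : Pᵀ * W * P = Matrix.diagonal mu := by
    rw [hWspec]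
    have e1 : Pᵀ * (P * Matrix.diagonal mu * Pᵀ) * P
        = (Pᵀ * P) * Matrix.diagonal mu * (Pᵀ * P) := by
      simp only [Matrix.mul_assoc]
    rw [e1, hPl, Matrix.one_mul, Matrix.mul_one]
  -- entrywise solution formula
  have hHt : ∀ t ∈ Set.Ici (0:ℝ), ∀ i j,
      (Qᵀ * F t * P) i j = Real.exp (r i j * t) * H0 i j := by
    intro t ht i j
    have hder : ∀ s ∈ Set.Ici (0:ℝ),
        HasDerivWithinAt (fun u => (Qᵀ * F u * P) i j)
          (r i j * (Qᵀ * F s * P) i j) (Set.Ici 0) s := by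
      intro s hs
      have hF := hode s hs
      have hL := ((entryLM Q P i j).toContinuousLinearMap.hasFDerivAt
        (x := F s)).comp_hasDerivWithinAt s hF
      have hval : (entryLM Q P i j) (Ahat * F s * W) = r i j * (Qᵀ * F s * P) i j := by
        have hconj : Qᵀ * (Ahat * F s * W) * P
            = Matrix.diagonal (fun i => 1 - lam i) * (Qᵀ * F s * P) * Matrix.diagonal mu := by
          rw [← hAconj, ← hWconj]
          simp only [Matrix.mul_assoc]
          rw [hQc, hPc]
        simp only [entryLM, LinearMap.coe_mk, AddHom.coe_mk]
        rw [hconj, Matrix.mul_diagonal, Matrix.diagonal_mul]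
        ring
      have : HasDerivWithinAt (fun u => (entryLM Q P i j) (F u))
          (r i j * (Qᵀ * F s * P) i j) (Set.Ici 0) s := by
        rw [← hval]
        exact hL
      simpa [entryLM] using this
    have := scalar_ode hder t ht
    rw [hF0] at this
    exact this
  -- solution in closed form
  have hFt : ∀ t ∈ Set.Ici (0:ℝ),
      F t = Q * (Matrix.of fun i j => Real.exp (r i j * t) * H0 i j) * Pᵀ := by
    intro t ht
    have h1 : Qᵀ * F t * P = Matrix.of fun i j => Real.exp (r i j * t) * H0 i j := by
      ext i j
      exact hHt t ht i j
    have h2 : Q * (Qᵀ * F t * P) * Pᵀ = F t := by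
      calc Q * (Qᵀ * F t * P) * Pᵀ = (Q * Qᵀ) * F t * (P * Pᵀ) := by
            simp only [Matrix.mul_assoc]
        _ = F t := by rw [hQr, hPr, Matrix.one_mul, Matrix.mul_one]
    rw [← h2, h1]
  refine ⟨?_, ?_⟩
  · -- nonvanishing
    intro t ht hzero
    have h1 := hHt t ht i0 j0
    rw [hzero] at h1
    simp only [Matrix.mul_zero, Matrix.zero_mul, Matrix.zero_apply] at h1
    exact hf i0 j0 (by
      have := h1.symm
      rcases mul_eq_zero.mp this with h | h
      · exact absurd h (Real.exp_ne_zero _)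
      · exact h)
  · -- the limit
    set μs := mu jD with hμs
    set c : Fin n → Fin d → ℝ := fun i j => (H0 i j)^2 with hc
    have hcpos : ∀ i j, 0 < c i j := fun i j => by
      have := hf i j
      positivity
    set Ntil : ℝ → ℝ := fun t => ∑ i, ∑ j, lam i * c i j * Real.exp (2*(r i j - μs)*t)
      with hNtil
    set Dtil : ℝ → ℝ := fun t => ∑ i, ∑ j, c i j * Real.exp (2*(r i j - μs)*t)
      with hDtil
    set L : ℝ := ∑ i, ∑ j, if r i j = μs then c i j else 0 with hL
    have hkey' : ∀ i j, r i j < μs ∨ (r i j = μs ∧ lam i = 0) := hkey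
    have hDtilpos : ∀ t, 0 < Dtil t := fun t =>
      Finset.sum_pos' (fun i _ => Finset.sum_nonneg fun j _ =>
          le_of_lt (by have := hcpos i j; positivity))
        ⟨i0, Finset.mem_univ _, Finset.sum_pos' (fun j _ =>
            le_of_lt (by have := hcpos i0 j; positivity))
          ⟨j0, Finset.mem_univ _, by have := hcpos i0 j0; positivity⟩⟩
    have hLpos : 0 < L := by
      rw [hL]
      apply Finset.sum_pos' (fun i _ => Finset.sum_nonneg fun j _ => by
        split <;> [exact le_of_lt (hcpos i _); exact le_refl 0])
      refine ⟨i0, Finset.mem_univ _, Finset.sum_pos' (fun j _ => by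
        split <;> [exact le_of_lt (hcpos i0 _); exact le_refl 0]) ⟨jD, Finset.mem_univ _, ?_⟩⟩
      have hr0 : r i0 jD = μs := by
        show (1 - lam i0) * mu jD = μs
        rw [hlam0, hμs]
        ring
      rw [if_pos hr0]
      exact hcpos i0 jD
    have hNlim : Tendsto Ntil atTop (nhds 0) := by
      rw [hNtil]
      have : Tendsto (fun t : ℝ => ∑ i : Fin n, ∑ j : Fin d,
          lam i * c i j * Real.exp (2*(r i j - μs)*t)) atTop
          (nhds (∑ i : Fin n, ∑ j : Fin d, (0:ℝ))) := by
        apply tendsto_finset_sum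
        intro i _
        apply tendsto_finset_sum
        intro j _
        rcases hkey' i j with hlt | ⟨_, hzero⟩
        · have hk : 2*(r i j - μs) < 0 := by linarith
          have := (tendsto_exp_neg hk).const_mul (lam i * c i j)
          simpa using this
        · simp [hzero]
      simpa using this
    have hDlim : Tendsto Dtil atTop (nhds L) := by
      rw [hDtil, hL]
      apply tendsto_finset_sum
      intro i _
      apply tendsto_finset_sum
      intro j _
      rcases hkey' i j with hlt | ⟨heq, _⟩
      · have hk : 2*(r i j - μs) < 0 := by linarith
        rw [if_neg (ne_of_lt hlt)]
        have := (tendsto_exp_neg hk).const_mul (c i j)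
        simpa using this
      · rw [if_pos heq, heq]
        simp
    have hratio : Tendsto (fun t => Ntil t / Dtil t) atTop (nhds 0) := by
      have := hNlim.div hDlim (ne_of_gt hLpos)
      rw [zero_div] at this
      exact this
    have hgoal0 : lam i0 = 0 := hlam0
    rw [show lam (⟨0, by omega⟩ : Fin n) = 0 from hgoal0]
    apply hratio.congr'
    filter_upwards [eventually_ge_atTop (0:ℝ)] with t ht
    have htI : t ∈ Set.Ici (0:ℝ) := ht
    -- rewrite trace and Frobenius norm
    have hFeq := hFt t htI
    set Ht : Matrix (Fin n) (Fin d) ℝ := Matrix.of fun i j => Real.exp (r i j * t) * H0 i j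
      with hHtdef
    have htrace : ((F t)ᵀ * Δ * F t).trace = ∑ i, ∑ j, lam i * (Ht i j)^2 := by
      rw [hFeq, hΔspec]
      have e1 : (Q * Ht * Pᵀ)ᵀ * (Q * Matrix.diagonal lam * Qᵀ) * (Q * Ht * Pᵀ)
          = P * (Htᵀ * Matrix.diagonal lam * Ht) * Pᵀ := by
        rw [Matrix.transpose_mul, Matrix.transpose_mul, Matrix.transpose_transpose]
        simp only [Matrix.mul_assoc]
        rw [hQc', hQc']
      rw [e1, Matrix.trace_mul_cycle, ← Matrix.mul_assoc, hPl, Matrix.one_mul,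
        trace_conj_diag]
    have hfro : ∑ i, ∑ j, (F t i j)^2 = ∑ i, ∑ j, (Ht i j)^2 := by
      rw [← trace_self (F t)]
      rw [hFeq]
      have e1 : (Q * Ht * Pᵀ)ᵀ * (Q * Ht * Pᵀ) = P * (Htᵀ * Ht) * Pᵀ := by
        rw [Matrix.transpose_mul, Matrix.transpose_mul, Matrix.transpose_transpose]
        simp only [Matrix.mul_assoc]
        rw [hQc']
      rw [e1, Matrix.trace_mul_cycle, ← Matrix.mul_assoc, hPl, Matrix.one_mul, trace_self]
    rw [htrace, hfro]
    -- now identify with Ntil / Dtil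
    have hexp : ∀ i j, (Ht i j)^2 = c i j * Real.exp (2*(r i j - μs)*t) * Real.exp (2*μs*t) := by
      intro i j
      show (Real.exp (r i j * t) * H0 i j)^2
          = (H0 i j)^2 * Real.exp (2*(r i j - μs)*t) * Real.exp (2*μs*t)
      rw [mul_pow]
      rw [show Real.exp (r i j * t)^2
          = Real.exp (2*(r i j - μs)*t) * Real.exp (2*μs*t) from by
        rw [← Real.exp_add,
          show 2*(r i j - μs)*t + 2*μs*t = ((2:ℕ):ℝ)*(r i j*t) from by push_cast; ring,
          Real.exp_nat_mul]]
      ring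
    have hN : ∑ i, ∑ j, lam i * (Ht i j)^2 = Ntil t * Real.exp (2*μs*t) := by
      rw [hNtil, Finset.sum_mul]
      refine Finset.sum_congr rfl fun i _ => ?_
      rw [Finset.sum_mul]
      refine Finset.sum_congr rfl fun j _ => ?_
      rw [hexp i j]
      ring
    have hD : ∑ i, ∑ j, (Ht i j)^2 = Dtil t * Real.exp (2*μs*t) := by
      rw [hDtil, Finset.sum_mul]
      refine Finset.sum_congr rfl fun i _ => ?_
      rw [Finset.sum_mul]
      refine Finset.sum_congr rfl fun j _ => ?_
      rw [hexp i j]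
    rw [hN, hD, mul_div_mul_right _ _ (Real.exp_ne_zero _)]
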